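/- Let X be a finite set with d linear orders ≤₁, …, ≤_d, let s : X → {±1}, and let R be the set of sign functions r : [d] → {±1} with r(1) = 1. For r ∈ R and x ∈ X, define ι_r(x) as the length of the longest s-alternating sequence ending at x which is increasing in ≤_i for each i with r(i)=+1 and decreasing in ≤_i for each i with r(i)=-1. Then for all x, y ∈ X with s(x) ≠ s(y), the vectors (ι_r(x))_{r ∈ R} and (ι_r(y))_{r ∈ R} in N^R are distinct. -/

import Mathlib

/-- The length (number of elements) of the longest `s`-alternating sequence ending
at `x` which is increasing in `lt t` when `r t = 1` and decreasing in `lt t`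
when `r t = -1`. -/
noncomputable def altChainLenMulti {X : Type*} {d : ℕ} (lt : Fin d → X → X → Prop)
    (r : Fin d → ℤˣ) (s : X → ℤˣ) (x : X) : ℕ :=
  sSup {k : ℕ | ∃ g : Fin k → X, (∃ hk : 0 < k, g ⟨k - 1, by omega⟩ = x) ∧
    ∀ i j : Fin k, (i : ℕ) + 1 = (j : ℕ) →
      s (g j) = -s (g i) ∧
      ∀ t : Fin d, if r t = 1 then lt t (g i) (g j) else lt t (g j) (g i)}

section Aux

variable {X : Type*} {d : ℕ}

/-- The defining set. -/
def altSet (lt : Fin d → X → X → Prop) (r : Fin d → ℤˣ) (s : X → ℤˣ) (x : X) : Set ℕ :=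
  {k : ℕ | ∃ g : Fin k → X, (∃ hk : 0 < k, g ⟨k - 1, by omega⟩ = x) ∧
    ∀ i j : Fin k, (i : ℕ) + 1 = (j : ℕ) →
      s (g j) = -s (g i) ∧
      ∀ t : Fin d, if r t = 1 then lt t (g i) (g j) else lt t (g j) (g i)}

lemma altChainLenMulti_eq (lt : Fin d → X → X → Prop) (r : Fin d → ℤˣ) (s : X → ℤˣ)
    (x : X) : altChainLenMulti lt r s x = sSup (altSet lt r s x) := rfl

lemma one_mem_altSet (lt : Fin d → X → X → Prop) (r : Fin d → ℤˣ) (s : X → ℤˣ)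
    (x : X) : 1 ∈ altSet lt r s x := by
  refine ⟨fun _ => x, ⟨one_pos, rfl⟩, ?_⟩
  intro i j h
  have := i.isLt
  have := j.isLt
  omega

lemma chain_mono (hd : 0 < d) (lt : Fin d → X → X → Prop)
    (hlt : ∀ t, IsStrictTotalOrder X (lt t)) {r : Fin d → ℤˣ} (hr : r ⟨0, hd⟩ = 1)
    {s : X → ℤˣ} {k : ℕ} {g : Fin k → X}
    (hg : ∀ i j : Fin k, (i : ℕ) + 1 = (j : ℕ) →
      s (g j) = -s (g i) ∧
      ∀ t : Fin d, if r t = 1 then lt t (g i) (g j) else lt t (g j) (g i)) :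
    ∀ i j : Fin k, (i : ℕ) < (j : ℕ) → lt ⟨0, hd⟩ (g i) (g j) := by
  have step : ∀ i j : Fin k, (i : ℕ) + 1 = (j : ℕ) → lt ⟨0, hd⟩ (g i) (g j) := by
    intro i j h
    have := (hg i j h).2 ⟨0, hd⟩
    rwa [hr, if_pos rfl] at this
  have main : ∀ m : ℕ, ∀ i j : Fin k, (j : ℕ) = (i : ℕ) + m + 1 → lt ⟨0, hd⟩ (g i) (g j) := by
    intro m
    induction m with
    | zero => intro i j h; exact step i j (by omega)
    | succ n ih =>
        intro i j h
        have hmid : (i : ℕ) + n + 1 < k := by omega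
        have h1 := ih i ⟨(i : ℕ) + n + 1, hmid⟩ rfl
        have h2 := step ⟨(i : ℕ) + n + 1, hmid⟩ j (by simp; omega)
        exact (hlt ⟨0, hd⟩).trans _ _ _ h1 h2
  intro i j h
  exact main ((j : ℕ) - (i : ℕ) - 1) i j (by omega)

lemma bddAbove_altSet [Fintype X] (hd : 0 < d) (lt : Fin d → X → X → Prop)
    (hlt : ∀ t, IsStrictTotalOrder X (lt t)) {r : Fin d → ℤˣ} (hr : r ⟨0, hd⟩ = 1)
    (s : X → ℤˣ) (x : X) : BddAbove (altSet lt r s x) := by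
  refine ⟨Fintype.card X, ?_⟩
  rintro k ⟨g, -, hg⟩
  have hmono := chain_mono hd lt hlt hr hg
  have hginj : Function.Injective g := by
    intro i j hij
    by_contra hne
    rcases lt_or_gt_of_ne (fun h : (i : ℕ) = (j : ℕ) => hne (Fin.ext h)) with h | h
    · exact (hlt ⟨0, hd⟩).irrefl (g i) (hij ▸ hmono i j h)
    · exact (hlt ⟨0, hd⟩).irrefl (g j) (hij ▸ hmono j i h)
  simpa using Fintype.card_le_of_injective g hginj

lemma units_neg {u v : ℤˣ} (h : u ≠ v) : v = -u := by revert h; revert u v; decide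

lemma key_lemma [Fintype X] (hd : 0 < d) (lt : Fin d → X → X → Prop)
    (hlt : ∀ t, IsStrictTotalOrder X (lt t)) (s : X → ℤˣ) {x y : X}
    (hxy : lt ⟨0, hd⟩ x y) (hs : s x ≠ s y) :
    ∃ r : {r : Fin d → ℤˣ // r ⟨0, hd⟩ = 1},
      altChainLenMulti lt r.val s x < altChainLenMulti lt r.val s y := by
  classical
  have hne : x ≠ y := fun h => hs (h ▸ rfl)
  set r : Fin d → ℤˣ := fun t => if lt t x y then 1 else -1 with hrdef
  have hr : r ⟨0, hd⟩ = 1 := by simp [hrdef, hxy]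
  refine ⟨⟨r, hr⟩, ?_⟩
  show sSup (altSet lt r s x) < sSup (altSet lt r s y)
  set k := sSup (altSet lt r s x) with hk
  have hkmem : k ∈ altSet lt r s x :=
    Nat.sSup_mem ⟨1, one_mem_altSet lt r s x⟩ (bddAbove_altSet hd lt hlt hr s x)
  obtain ⟨g, ⟨hkpos, hglast⟩, hg⟩ := hkmem
  have hnew : k + 1 ∈ altSet lt r s y := by
    refine ⟨fun i => if h : (i : ℕ) < k then g ⟨i, h⟩ else y, ⟨by omega, ?_⟩, ?_⟩
    · simp
    · intro i j hij
      beta_reduce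
      by_cases hj : (j : ℕ) < k
      · have hi : (i : ℕ) < k := by omega
        rw [dif_pos hi, dif_pos hj]
        exact hg ⟨i, hi⟩ ⟨j, hj⟩ hij
      · have hjk : (j : ℕ) = k := by have := j.isLt; omega
        have hi : (i : ℕ) < k := by omega
        have hik : (i : ℕ) = k - 1 := by omega
        have hgi : g ⟨(i : ℕ), hi⟩ = x := by
          have : (⟨(i : ℕ), hi⟩ : Fin k) = ⟨k - 1, by omega⟩ := Fin.ext (by simp; omega)
          rw [this, hglast]
        rw [dif_pos hi, dif_neg (by omega), hgi]
        refine ⟨units_neg hs, ?_⟩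
        intro t
        by_cases ht : lt t x y
        · rw [if_pos (by simp [hrdef, ht])]; exact ht
        · rw [if_neg (by simp [hrdef, ht])]
          rcases @trichotomous _ (lt t) (hlt t).toTrichotomous x y with h | h | h
          · exact absurd h ht
          · exact absurd h hne
          · exact h
  have : k + 1 ≤ sSup (altSet lt r s y) :=
    le_csSup (bddAbove_altSet hd lt hlt hr s y) hnew
  omega

end Aux

/-- For `d` linear orders on a finite set `X` and a coloring `s : X → {±1}`,
points of different colors have distinct vectors `(ι_r)_{r ∈ R}`, where `R` is
the set of sign functions `r : [d] → {±1}` with `r 1 = 1`. -/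
theorem iota_vector_injective_on_colors {X : Type*} [Fintype X] {d : ℕ} (hd : 0 < d)
    (lt : Fin d → X → X → Prop)
    (hlt : ∀ t, IsStrictTotalOrder X (lt t))
    (s : X → ℤˣ) :
    ∀ x y : X, s x ≠ s y →
      (fun r : {r : Fin d → ℤˣ // r ⟨0, hd⟩ = 1} => altChainLenMulti lt r.val s x) ≠
      (fun r : {r : Fin d → ℤˣ // r ⟨0, hd⟩ = 1} => altChainLenMulti lt r.val s y) := by
  intro x y hs hEq
  have hne : x ≠ y := fun h => hs (h ▸ rfl)
  rcases @trichotomous _ (lt ⟨0, hd⟩) (hlt ⟨0, hd⟩).toTrichotomous x y with h | h | h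
  · obtain ⟨r, hr⟩ := key_lemma hd lt hlt s h hs
    exact absurd (congrFun hEq r) (by omega)
  · exact hne h
  · obtain ⟨r, hr⟩ := key_lemma hd lt hlt s h hs.symm
    exact absurd (congrFun hEq r).symm (by omega)
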